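/- Every point p of a topological space X has a Noetherian neighborhood base: a family B of open sets each containing p, with no infinite strictly ⊆-increasing sequence, such that every open set containing p contains some member of B. -/

import Mathlib

universe u

/-- A family of sets is Noetherian iff it contains no infinite strictly
`⊆`-increasing sequence. -/
def NoetherianFamily {α : Type u} (B : Set (Set α)) : Prop :=
  ¬ ∃ f : ℕ → Set α, (∀ n, f n ∈ B) ∧ StrictMono f

/-- Every point of a topological space has a Noetherian neighborhood base. -/
theorem stmt3 {X : Type u} [TopologicalSpace X] (p : X) :
    ∃ B : Set (Set X), (∀ G ∈ B, IsOpen G ∧ p ∈ G) ∧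
      (∀ U : Set X, IsOpen U → p ∈ U → ∃ G ∈ B, G ⊆ U) ∧
      NoetherianFamily B := by
  classical
  set r : Set X → Set X → Prop := WellOrderingRel with hr
  have wf : WellFounded r := (WellOrderingRel.isWellOrder).wf
  refine ⟨{ U | IsOpen U ∧ p ∈ U ∧ ∀ V : Set X, IsOpen V → p ∈ V → V ⊂ U → r U V },
    ?_, ?_, ?_⟩
  · intro G hG; exact ⟨hG.1, hG.2.1⟩
  · intro U hU hpU
    have hne : {V : Set X | IsOpen V ∧ p ∈ V ∧ V ⊆ U}.Nonempty := ⟨U, hU, hpU, le_refl _⟩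
    refine ⟨wf.min _ hne, ?_, (wf.min_mem _ hne).2.2⟩
    obtain ⟨hGo, hpG, hGU⟩ := wf.min_mem _ hne
    refine ⟨hGo, hpG, fun V hVo hpV hVG => ?_⟩
    have hmem : V ∈ {V : Set X | IsOpen V ∧ p ∈ V ∧ V ⊆ U} :=
      ⟨hVo, hpV, hVG.subset.trans hGU⟩
    -- trichotomy: either r (min) V or they are equal or r V (min); latter impossible
    rcases trichotomous_of (WellOrderingRel (α := Set X)) (wf.min _ hne) V with h | h | h
    · exact h
    · exact absurd h.symm hVG.ne
    · exact absurd h (wf.not_lt_min _ hmem)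
  · rintro ⟨f, hfB, hf⟩
    have hdesc : ∀ n, r (f (n + 1)) (f n) := by
      intro n
      exact (hfB (n + 1)).2.2 (f n) (hfB n).1 (hfB n).2.1 (hf (Nat.lt_succ_self n))
    obtain ⟨n, hn⟩ := wf.has_min (Set.range f) ⟨f 0, Set.mem_range_self 0⟩
    obtain ⟨m, rfl⟩ := hn.1
    exact hn.2 (f (m + 1)) (Set.mem_range_self _) (hdesc m)
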